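/- Let S be an inverse semigroup with zero. There is a bijection between the set of proper filters of S that contain an idempotent and the set of proper filters of the meet semilattice E(S) of idempotents, given by A ↦ A ∩ E(S) with inverse F ↦ F↑ (upward closure in S). Moreover, this bijection restricts to a bijection between idempotent ultrafilters of S and ultrafilters of E(S). -/
import Mathlib


/-- An inverse semigroup with zero: associative multiplication, unique
generalized inverses, and a multiplicatively absorbing zero. -/
structure InvSemigroupZero (S : Type*) [Mul S] [Inv S] [Zero S] : Prop where
  mul_assoc : ∀ a b c : S, a * b * c = a * (b * c)
  mul_inv_mul : ∀ a : S, a * a⁻¹ * a = a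
  inv_mul_inv : ∀ a : S, a⁻¹ * a * a⁻¹ = a⁻¹
  inv_unique : ∀ a t : S, a * t * a = a → t * a * t = t → t = a⁻¹
  zero_mul : ∀ a : S, 0 * a = 0
  mul_zero : ∀ a : S, a * 0 = 0

def IsIdem {S : Type*} [Mul S] (e : S) : Prop := e * e = e

/-- The natural partial order: `s ≤ t` iff `s = t e` for some idempotent `e`. -/
def natLe {S : Type*} [Mul S] (s t : S) : Prop := ∃ e : S, IsIdem e ∧ s = t * e

/-- `s` and `t` are compatible iff `s⁻¹ t` and `s t⁻¹` are idempotents. -/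
def Compat {S : Type*} [Mul S] [Inv S] (s t : S) : Prop :=
  IsIdem (s⁻¹ * t) ∧ IsIdem (s * t⁻¹)

/-- Upward closure of a subset in the natural partial order. -/
def upc {S : Type*} [Mul S] (X : Set S) : Set S := {s | ∃ x ∈ X, natLe x s}

/-- A filter: nonempty, upward closed and downward directed. -/
def IsFilt {S : Type*} [Mul S] (A : Set S) : Prop :=
  A.Nonempty ∧ (∀ a ∈ A, ∀ s, natLe a s → s ∈ A) ∧
    ∀ a ∈ A, ∀ b ∈ A, ∃ c ∈ A, natLe c a ∧ natLe c b

/-- A proper filter: a filter not containing `0`. -/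
def IsPFilt {S : Type*} [Mul S] [Zero S] (A : Set S) : Prop := IsFilt A ∧ (0 : S) ∉ A

def dF {S : Type*} [Mul S] [Inv S] (A : Set S) : Set S :=
  upc {p | ∃ a ∈ A, ∃ b ∈ A, p = a⁻¹ * b}

def rF {S : Type*} [Mul S] [Inv S] (A : Set S) : Set S :=
  upc {p | ∃ a ∈ A, ∃ b ∈ A, p = a * b⁻¹}

def invF {S : Type*} [Inv S] (A : Set S) : Set S := Inv.inv '' A

def mulF {S : Type*} [Mul S] (A B : Set S) : Set S :=
  upc {p | ∃ a ∈ A, ∃ b ∈ B, p = a * b}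

/-- An ultrafilter: a maximal proper filter. -/
def IsUltraF {S : Type*} [Mul S] [Zero S] (A : Set S) : Prop :=
  IsPFilt A ∧ ∀ B : Set S, IsPFilt B → A ⊆ B → A = B

/-- A proper filter of the meet semilattice `E(S)` of idempotents: a nonempty
set of idempotents, upward closed among idempotents, closed under meets
(= products of idempotents), not containing `0`. -/
def EFilt {S : Type*} [Mul S] [Zero S] (F : Set S) : Prop :=
  (∀ e ∈ F, IsIdem e) ∧ F.Nonempty ∧
    (∀ e ∈ F, ∀ f : S, IsIdem f → natLe e f → f ∈ F) ∧
    (∀ e ∈ F, ∀ f ∈ F, e * f ∈ F) ∧ (0 : S) ∉ F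

/-- An ultrafilter of `E(S)`. -/
def EUltra {S : Type*} [Mul S] [Zero S] (F : Set S) : Prop :=
  EFilt F ∧ ∀ F' : Set S, EFilt F' → F ⊆ F' → F = F'

/-- A proper filter of `S` containing an idempotent. -/
def IdemPFilt {S : Type*} [Mul S] [Zero S] (A : Set S) : Prop :=
  IsPFilt A ∧ ∃ e ∈ A, IsIdem e


namespace ISZhelper

variable {S : Type*} [Mul S] [Inv S] [Zero S]

lemma ml (hS : InvSemigroupZero S) {a b c : S} (h : a * b = c) (x : S) :
    a * (b * x) = c * x := by rw [← hS.mul_assoc, h]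

lemma mim (hS : InvSemigroupZero S) (a : S) : a * (a⁻¹ * a) = a := by
  rw [← hS.mul_assoc]; exact hS.mul_inv_mul a

lemma imi (hS : InvSemigroupZero S) (a : S) : a⁻¹ * (a * a⁻¹) = a⁻¹ := by
  rw [← hS.mul_assoc]; exact hS.inv_mul_inv a

lemma my_inv_inv (hS : InvSemigroupZero S) (a : S) : a⁻¹⁻¹ = a :=
  (hS.inv_unique a⁻¹ a (hS.inv_mul_inv a) (hS.mul_inv_mul a)).symm

lemma idem_inv (hS : InvSemigroupZero S) {e : S} (he : IsIdem e) : e⁻¹ = e :=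
  (hS.inv_unique e e (by rw [he, he]) (by rw [he, he])).symm

lemma idem_ii (hS : InvSemigroupZero S) (a : S) : IsIdem (a⁻¹ * a) := by
  show a⁻¹ * a * (a⁻¹ * a) = a⁻¹ * a
  rw [hS.mul_assoc, mim hS a]

lemma idem_i2 (hS : InvSemigroupZero S) (a : S) : IsIdem (a * a⁻¹) := by
  show a * a⁻¹ * (a * a⁻¹) = a * a⁻¹
  rw [hS.mul_assoc, imi hS a]

lemma idem_mul (hS : InvSemigroupZero S) {e f : S} (he : IsIdem e) (hf : IsIdem f) :
    IsIdem (e * f) := by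
  have h1 : (e * f) * (f * (e * f)⁻¹ * e) * (e * f) = e * f := by
    have h := hS.mul_inv_mul (e * f)
    simp only [hS.mul_assoc] at h ⊢
    rw [ml hS hf, ml hS he]
    exact h
  have h3 : (e * f)⁻¹ * (e * (f * ((e * f)⁻¹ * e))) = (e * f)⁻¹ * e := by
    have h := hS.inv_mul_inv (e * f)
    simp only [hS.mul_assoc] at h
    calc (e * f)⁻¹ * (e * (f * ((e * f)⁻¹ * e)))
        = ((e * f)⁻¹ * (e * (f * (e * f)⁻¹))) * e := by simp only [hS.mul_assoc]
      _ = (e * f)⁻¹ * e := by rw [h]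
  have h2 : (f * (e * f)⁻¹ * e) * (e * f) * (f * (e * f)⁻¹ * e) = f * (e * f)⁻¹ * e := by
    simp only [hS.mul_assoc]
    rw [ml hS he, ml hS hf, h3]
  have hxe : f * (e * f)⁻¹ * e = (e * f)⁻¹ := hS.inv_unique (e * f) _ h1 h2
  have hxidem : IsIdem ((e * f)⁻¹) := by
    show (e * f)⁻¹ * (e * f)⁻¹ = (e * f)⁻¹
    conv_lhs => rw [← hxe]
    calc (f * (e * f)⁻¹ * e) * (f * (e * f)⁻¹ * e)
        = f * ((e * f)⁻¹ * (e * (f * ((e * f)⁻¹ * e)))) := by simp only [hS.mul_assoc]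
      _ = f * ((e * f)⁻¹ * e) := by rw [h3]
      _ = (e * f)⁻¹ := by rw [← hS.mul_assoc]; exact hxe
  have hfix : e * f = (e * f)⁻¹ := by
    conv_lhs => rw [← my_inv_inv hS (e * f)]
    exact idem_inv hS hxidem
  show (e * f) * (e * f) = e * f
  rw [hfix]
  exact hxidem

lemma idem_comm (hS : InvSemigroupZero S) {e f : S} (he : IsIdem e) (hf : IsIdem f) :
    e * f = f * e := by
  have hef : IsIdem (e * f) := idem_mul hS he hf
  have hfe : IsIdem (f * e) := idem_mul hS hf he
  have h1 : (e * f) * (f * e) * (e * f) = e * f := by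
    simp only [hS.mul_assoc]
    rw [ml hS hf, ml hS he]
    have h : (e * f) * (e * f) = e * f := hef
    simp only [hS.mul_assoc] at h
    exact h
  have h2 : (f * e) * (e * f) * (f * e) = f * e := by
    simp only [hS.mul_assoc]
    rw [ml hS he, ml hS hf]
    have h : (f * e) * (f * e) = f * e := hfe
    simp only [hS.mul_assoc] at h
    exact h
  have key := hS.inv_unique (e * f) (f * e) h1 h2
  rw [idem_inv hS hef] at key
  exact key.symm

lemma mul_inv_rev (hS : InvSemigroupZero S) (a b : S) : (a * b)⁻¹ = b⁻¹ * a⁻¹ := by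
  have hc : (b * b⁻¹) * (a⁻¹ * a) = (a⁻¹ * a) * (b * b⁻¹) :=
    idem_comm hS (idem_i2 hS b) (idem_ii hS a)
  have h1 : (a * b) * (b⁻¹ * a⁻¹) * (a * b) = a * b := by
    calc (a * b) * (b⁻¹ * a⁻¹) * (a * b)
        = a * (b * b⁻¹) * (a⁻¹ * a) * b := by simp only [hS.mul_assoc]
      _ = a * ((a⁻¹ * a) * (b * b⁻¹)) * b := by
          rw [hS.mul_assoc a (b * b⁻¹) (a⁻¹ * a), hc]
      _ = (a * (a⁻¹ * a)) * ((b * b⁻¹) * b) := by simp only [hS.mul_assoc]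
      _ = a * b := by rw [mim hS a, hS.mul_inv_mul b]
  have h2 : (b⁻¹ * a⁻¹) * (a * b) * (b⁻¹ * a⁻¹) = b⁻¹ * a⁻¹ := by
    calc (b⁻¹ * a⁻¹) * (a * b) * (b⁻¹ * a⁻¹)
        = b⁻¹ * (a⁻¹ * a) * (b * b⁻¹) * a⁻¹ := by simp only [hS.mul_assoc]
      _ = b⁻¹ * ((b * b⁻¹) * (a⁻¹ * a)) * a⁻¹ := by
          rw [hS.mul_assoc b⁻¹ (a⁻¹ * a) (b * b⁻¹), ← hc]
      _ = (b⁻¹ * (b * b⁻¹)) * ((a⁻¹ * a) * a⁻¹) := by simp only [hS.mul_assoc]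
      _ = b⁻¹ * a⁻¹ := by rw [imi hS b, hS.mul_assoc a⁻¹ a a⁻¹, imi hS a]
  exact (hS.inv_unique (a * b) (b⁻¹ * a⁻¹) h1 h2).symm

lemma natLe_refl (hS : InvSemigroupZero S) (s : S) : natLe s s :=
  ⟨s⁻¹ * s, idem_ii hS s, (mim hS s).symm⟩

lemma natLe_trans (hS : InvSemigroupZero S) {s t u : S}
    (h1 : natLe s t) (h2 : natLe t u) : natLe s u := by
  obtain ⟨e, he, rfl⟩ := h1
  obtain ⟨f, hf, rfl⟩ := h2
  exact ⟨f * e, idem_mul hS hf he, (hS.mul_assoc u f e)⟩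

lemma natLe_eq (hS : InvSemigroupZero S) {s t : S} (h : natLe s t) :
    s = t * (s⁻¹ * s) := by
  obtain ⟨g, hg, rfl⟩ := h
  rw [mul_inv_rev hS, idem_inv hS hg]
  exact (calc t * ((g * t⁻¹) * (t * g))
      = t * (g * (t⁻¹ * t)) * g := by simp only [hS.mul_assoc]
    _ = t * ((t⁻¹ * t) * g) * g := by rw [idem_comm hS hg (idem_ii hS t)]
    _ = (t * (t⁻¹ * t)) * (g * g) := by simp only [hS.mul_assoc]
    _ = t * g := by rw [mim hS t, hg]).symm

lemma idem_le (hS : InvSemigroupZero S) {e f : S} (he : IsIdem e) (h : natLe e f) :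
    e = f * e := by
  have h2 := natLe_eq hS h
  rw [idem_inv hS he, he] at h2
  exact h2

lemma idem_of_le_idem (hS : InvSemigroupZero S) {s t : S} (ht : IsIdem t)
    (h : natLe s t) : IsIdem s := by
  obtain ⟨g, hg, rfl⟩ := h
  exact idem_mul hS ht hg

lemma conj_idem (hS : InvSemigroupZero S) {e : S} (he : IsIdem e) (b : S) :
    IsIdem (b⁻¹ * e * b) := by
  show (b⁻¹ * e * b) * (b⁻¹ * e * b) = b⁻¹ * e * b
  calc (b⁻¹ * e * b) * (b⁻¹ * e * b)
      = b⁻¹ * (e * (b * b⁻¹)) * (e * b) := by simp only [hS.mul_assoc]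
    _ = b⁻¹ * ((b * b⁻¹) * e) * (e * b) := by rw [idem_comm hS he (idem_i2 hS b)]
    _ = (b⁻¹ * (b * b⁻¹)) * (e * (e * b)) := by simp only [hS.mul_assoc]
    _ = b⁻¹ * (e * b) := by rw [imi hS b, ml hS he]
    _ = b⁻¹ * e * b := (hS.mul_assoc _ _ _).symm

lemma shift (hS : InvSemigroupZero S) {e : S} (he : IsIdem e) (b : S) :
    e * b = b * (b⁻¹ * e * b) := by
  symm
  calc b * (b⁻¹ * e * b) = (b * b⁻¹) * e * b := by simp only [hS.mul_assoc]
    _ = e * (b * b⁻¹) * b := by rw [idem_comm hS (idem_i2 hS b) he]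
    _ = e * b := by rw [hS.mul_assoc e (b * b⁻¹) b, hS.mul_inv_mul b]

lemma le_zero_eq (hS : InvSemigroupZero S) {s : S} (h : natLe s 0) : s = 0 := by
  obtain ⟨g, _, rfl⟩ := h
  exact hS.zero_mul g

end ISZhelper

namespace ISZhelper

variable {S : Type*} [Mul S] [Inv S] [Zero S]

lemma part1 (hS : InvSemigroupZero S) {A : Set S} (hA : IdemPFilt A) :
    EFilt (A ∩ {e | IsIdem e}) ∧ upc (A ∩ {e | IsIdem e}) = A := by
  obtain ⟨⟨⟨hne, hup, hdir⟩, h0⟩, e, heA, he⟩ := hA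
  constructor
  · refine ⟨fun x hx => hx.2, ⟨e, heA, he⟩, ?_, ?_, fun h => h0 h.1⟩
    · exact fun x hx f hf hle => ⟨hup x hx.1 f hle, hf⟩
    · intro x hx y hy
      obtain ⟨c, hcA, hcx, hcy⟩ := hdir x hx.1 y hy.1
      have hcidem : IsIdem c := idem_of_le_idem hS hx.2 hcx
      have hcx' : c = x * c := idem_le hS hcidem hcx
      have hcy' : c = y * c := idem_le hS hcidem hcy
      have hle : natLe c (x * y) :=
        ⟨c, hcidem, by rw [hS.mul_assoc, ← hcy']; exact hcx'⟩
      exact ⟨hup c hcA (x * y) hle, idem_mul hS hx.2 hy.2⟩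
  · ext s
    constructor
    · rintro ⟨x, hx, hle⟩
      exact hup x hx.1 s hle
    · intro hs
      obtain ⟨c, hcA, hce, hcs⟩ := hdir e heA s hs
      exact ⟨c, ⟨hcA, idem_of_le_idem hS he hce⟩, hcs⟩

lemma part2 (hS : InvSemigroupZero S) {F : Set S} (hF : EFilt F) :
    IdemPFilt (upc F) ∧ upc F ∩ {e | IsIdem e} = F := by
  obtain ⟨hidem, ⟨e, heF⟩, hupE, hmeet, h0⟩ := hF
  have hsub : F ⊆ upc F := fun x hx => ⟨x, hx, natLe_refl hS x⟩
  constructor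
  · refine ⟨⟨⟨⟨e, hsub heF⟩, ?_, ?_⟩, ?_⟩, e, hsub heF, hidem e heF⟩
    · rintro a ⟨x, hx, hxa⟩ s has
      exact ⟨x, hx, natLe_trans hS hxa has⟩
    · rintro a ⟨x, hx, hxa⟩ b ⟨y, hy, hyb⟩
      have hxi : IsIdem x := hidem x hx
      have hyi : IsIdem y := hidem y hy
      have hxa' : x = a * x := idem_le hS hxi hxa
      have hyb' : y = b * y := idem_le hS hyi hyb
      have hxyF : x * y ∈ F := hmeet x hx y hy
      refine ⟨x * y, hsub hxyF, ⟨x * y, idem_mul hS hxi hyi, ?_⟩,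
        ⟨(b⁻¹ * x * b) * y, idem_mul hS (conj_idem hS hxi b) hyi, ?_⟩⟩
      · rw [← hS.mul_assoc, ← hxa']
      · calc x * y = x * (b * y) := by rw [← hyb']
          _ = (x * b) * y := (hS.mul_assoc _ _ _).symm
          _ = (b * (b⁻¹ * x * b)) * y := by rw [shift hS hxi b]
          _ = b * ((b⁻¹ * x * b) * y) := hS.mul_assoc _ _ _
    · rintro ⟨x, hx, hx0⟩
      exact h0 (le_zero_eq hS hx0 ▸ hx)
  · ext s
    constructor
    · rintro ⟨⟨x, hx, hxs⟩, hs⟩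
      exact hupE x hx s hs hxs
    · intro hs
      exact ⟨hsub hs, hidem s hs⟩

omit [Inv S] [Zero S] in
lemma upc_mono {X Y : Set S} (h : X ⊆ Y) : upc X ⊆ upc Y := by
  rintro s ⟨x, hx, hxs⟩; exact ⟨x, h hx, hxs⟩

lemma part3 (hS : InvSemigroupZero S) {A : Set S} (hA : IdemPFilt A) :
    IsUltraF A ↔ EUltra (A ∩ {e | IsIdem e}) := by
  obtain ⟨hEF, hupcA⟩ := part1 hS hA
  constructor
  · rintro ⟨hPF, hmax⟩
    refine ⟨hEF, fun F' hF' hsub => ?_⟩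
    obtain ⟨hF'filt, hF'eq⟩ := part2 hS hF'
    have hAsub : A ⊆ upc F' := by
      rw [← hupcA]; exact upc_mono hsub
    have hAeq : A = upc F' := hmax (upc F') hF'filt.1 hAsub
    rw [hAeq, hF'eq]
  · rintro ⟨_, hmax⟩
    refine ⟨hA.1, fun B hB hAB => ?_⟩
    obtain ⟨e, heA, he⟩ := hA.2
    have hB' : IdemPFilt B := ⟨hB, e, hAB heA, he⟩
    obtain ⟨hBE, hupcB⟩ := part1 hS hB'
    have hsub : A ∩ {e | IsIdem e} ⊆ B ∩ {e | IsIdem e} :=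
      Set.inter_subset_inter_left _ hAB
    have heq := hmax (B ∩ {e | IsIdem e}) hBE hsub
    rw [← hupcA, heq, hupcB]

end ISZhelper

/-- The maps `A ↦ A ∩ E(S)` and `F ↦ F↑` are mutually inverse bijections
between proper filters of `S` containing an idempotent and proper filters of
the meet semilattice `E(S)`; they restrict to a bijection between idempotent
ultrafilters of `S` and ultrafilters of `E(S)`. -/
theorem idempotent_filters_bijection {S : Type*} [Mul S] [Inv S] [Zero S]
    (hS : InvSemigroupZero S) :
    (∀ A : Set S, IdemPFilt A →
      EFilt (A ∩ {e | IsIdem e}) ∧ upc (A ∩ {e | IsIdem e}) = A) ∧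
    (∀ F : Set S, EFilt F → IdemPFilt (upc F) ∧ upc F ∩ {e | IsIdem e} = F) ∧
    (∀ A : Set S, IdemPFilt A → (IsUltraF A ↔ EUltra (A ∩ {e | IsIdem e}))) :=
  ⟨fun _ hA => ISZhelper.part1 hS hA, fun _ hF => ISZhelper.part2 hS hF,
    fun _ hA => ISZhelper.part3 hS hA⟩
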